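/- Consider the annulus X = {(r cos θ, r sin θ) : 1 ≤ r ≤ 2, θ ∈ [0, 2π]} ⊂ ℝ² with the semiflow φ of the vector field r' = 0, θ' = 1 (rigid counterclockwise rotation of each circle), the segment D = {(r, 0) : 1 ≤ r ≤ 2}, and the map I(r, 0) = (−1/2 − r/2, 0). Then: (a) I is Lipschitz with constant 1/2; (b) I(D) ∩ D = ∅; (c) the non-wandering set of the impulsive semiflow ψ of (X, φ, D, I) is the lower half of the unit circle {(cos θ, sin θ) : π ≤ θ ≤ 2π}. -/

import Mathlib

open Set Complex

/-- The annulus `X = {z : 1 ≤ |z| ≤ 2}` in the plane. -/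
def annulus : Set ℂ := {z : ℂ | 1 ≤ ‖z‖ ∧ ‖z‖ ≤ 2}

/-- The rotation semiflow of the vector field `r' = 0`, `θ' = 1`. -/
noncomputable def rotFlow (t : ℝ) (z : ℂ) : ℂ := Complex.exp (t * Complex.I) * z

/-- The segment `D = {(r, 0) : 1 ≤ r ≤ 2}`. -/
def segD : Set ℂ := {z : ℂ | z.im = 0 ∧ 1 ≤ z.re ∧ z.re ≤ 2}

/-- The impulse map `I(r, 0) = (-1/2 - r/2, 0)`. -/
noncomputable def impMap (z : ℂ) : ℂ := -(1 / 2 : ℂ) - z / 2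

/-- `x` is a non-wandering point of the semiflow `ψ` on the set `A`. -/
def NonWanderingOn (ψ : ℝ → ℂ → ℂ) (A : Set ℂ) (x : ℂ) : Prop :=
  x ∈ A ∧ ∀ ε : ℝ, 0 < ε → ∀ T : ℝ, 0 < T → ∃ t : ℝ, T < t ∧
    ∃ y ∈ A, dist y x < ε ∧ dist (ψ t y) x < ε

noncomputable def E (α : ℝ) : ℂ := Complex.exp (α * Complex.I)

lemma E_abs (α : ℝ) : ‖E α‖ = 1 := Complex.norm_exp_ofReal_mul_I α

lemma E_add (α β : ℝ) : E (α + β) = E α * E β := by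
  simp only [E]; rw [← Complex.exp_add]; push_cast; ring_nf

lemma E_zero : E 0 = 1 := by simp [E]

lemma E_two_pi : E (2 * Real.pi) = 1 := by
  simp only [E]; push_cast; exact Complex.exp_two_pi_mul_I

lemma E_pi : E Real.pi = -1 := by
  simp only [E]; exact_mod_cast Complex.exp_pi_mul_I

lemma E_period (α : ℝ) : E (α + 2 * Real.pi) = E α := by
  rw [E_add, E_two_pi, mul_one]

lemma E_re (α : ℝ) : (E α).re = Real.cos α := Complex.exp_ofReal_mul_I_re α
lemma E_im (α : ℝ) : (E α).im = Real.sin α := Complex.exp_ofReal_mul_I_im α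

lemma rot_aE (s a α : ℝ) : rotFlow s ((a : ℂ) * E α) = (a : ℂ) * E (s + α) := by
  simp only [rotFlow, E]
  rw [show ((s + α : ℝ) : ℂ) = (s : ℂ) + α by push_cast; ring, add_mul, Complex.exp_add]
  ring

/-- a point `a·e^{iα}` with `0 < a`, `0 < α < 2π` is not in `D`. -/
lemma not_mem_segD (a α : ℝ) (ha : 0 < a) (h0 : 0 < α) (h2 : α < 2 * Real.pi) :
    (a : ℂ) * E α ∉ segD := by
  rintro ⟨him, hre, -⟩
  have him' : a * Real.sin α = 0 := by
    simpa [Complex.mul_im, E_re, E_im] using him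
  have hs : Real.sin α = 0 := by
    rcases mul_eq_zero.1 him' with h | h
    · exact absurd h (ne_of_gt ha)
    · exact h
  obtain ⟨n, hn⟩ := Real.sin_eq_zero_iff.1 hs
  have hπ := Real.pi_pos
  have hn1 : n = 1 := by
    have h0' : (0:ℝ) < n * Real.pi := hn ▸ h0
    have h2' : (n:ℝ) * Real.pi < 2 * Real.pi := hn ▸ h2
    have hn0 : (0:ℝ) < (n:ℝ) := by
      by_contra h
      push_neg at h
      nlinarith
    have hn2 : (n:ℝ) < 2 := by nlinarith
    have : (0:ℤ) < n := by exact_mod_cast hn0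
    have : n < 2 := by exact_mod_cast hn2
    omega
  have hα : α = Real.pi := by rw [← hn, hn1]; push_cast; ring
  have hre' : (((a:ℂ)) * E α).re = a * Real.cos α := by
    simp [Complex.mul_re, E_re, E_im]
  rw [hre', hα, Real.cos_pi] at hre
  nlinarith

lemma real_mem_segD (a : ℝ) (h1 : 1 ≤ a) (h2 : a ≤ 2) : (a : ℂ) ∈ segD := by
  refine ⟨by simp, by simpa using h1, by simpa using h2⟩

lemma impMap_real (a : ℝ) : impMap (a : ℂ) = ((-(1 + a) / 2 : ℝ) : ℂ) := by
  simp only [impMap]; push_cast; ring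

lemma neg_real_eq (ρ : ℝ) : -(ρ : ℂ) = (ρ : ℂ) * E Real.pi := by
  rw [E_pi]; ring

lemma neg_real_mem_annulus (ρ : ℝ) (h1 : 1 ≤ ρ) (h2 : ρ ≤ 2) : -(ρ : ℂ) ∈ annulus := by
  have : ‖(-(ρ:ℂ))‖ = ρ := by
    rw [norm_neg, Complex.norm_real, Real.norm_eq_abs, _root_.abs_of_nonneg (by linarith : (0:ℝ) ≤ ρ)]
  exact ⟨by rw [this]; linarith, by rw [this]; linarith⟩

section Dyn

variable (ψ : ℝ → ℂ → ℂ)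
    (hid : ∀ x ∈ annulus, ψ 0 x = x)
    (hsemi : ∀ s t : ℝ, 0 ≤ s → 0 ≤ t → ∀ x ∈ annulus, ψ (t + s) x = ψ t (ψ s x))
    (hfollow : ∀ x ∈ annulus, ∀ t : ℝ, 0 ≤ t →
      (∀ s : ℝ, 0 < s → s ≤ t → rotFlow s x ∉ segD) → ψ t x = rotFlow t x)
    (hjump : ∀ x ∈ annulus, ∀ t : ℝ, 0 < t → rotFlow t x ∈ segD →
      (∀ s : ℝ, 0 < s → s < t → rotFlow s x ∉ segD) → ψ t x = impMap (rotFlow t x))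

include hjump in
/-- first hit: within time `≤ 2π` every point jumps to `-(1+|z|)/2`. -/
lemma first_hit : ∀ z ∈ annulus, ∃ τ : ℝ, 0 < τ ∧ τ ≤ 2 * Real.pi ∧
    ψ τ z = -(((1 + ‖z‖) / 2 : ℝ) : ℂ) := by
  intro z hz
  obtain ⟨h1, h2⟩ := hz
  have hπ := Real.pi_pos
  have ha : (0:ℝ) < ‖z‖ := by linarith
  set a : ℝ := ‖z‖ with haa
  set θ : ℝ := Complex.arg z with hθ
  have hzeq : z = (a : ℂ) * E θ := (Complex.norm_mul_exp_arg_mul_I z).symm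
  have hθ1 : -Real.pi < θ := Complex.neg_pi_lt_arg z
  have hθ2 : θ ≤ Real.pi := Complex.arg_le_pi z
  have himp : impMap ((a : ℂ)) = -(((1 + a) / 2 : ℝ) : ℂ) := by
    rw [impMap_real]; push_cast; ring
  rcases le_or_gt 0 θ with hc | hc
  · -- τ = 2π - θ
    refine ⟨2 * Real.pi - θ, by linarith, by linarith, ?_⟩
    have hhit : rotFlow (2 * Real.pi - θ) z = (a : ℂ) := by
      rw [hzeq, rot_aE]
      rw [show 2 * Real.pi - θ + θ = 2 * Real.pi by ring, E_two_pi, mul_one]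
    rw [hjump z ⟨h1, h2⟩ _ (by linarith) (by rw [hhit]; exact real_mem_segD a h1 h2) ?_, hhit, himp]
    intro s hs1 hs2
    rw [hzeq, rot_aE]
    exact not_mem_segD a (s + θ) ha (by linarith) (by linarith)
  · -- τ = -θ
    refine ⟨-θ, by linarith, by linarith, ?_⟩
    have hhit : rotFlow (-θ) z = (a : ℂ) := by
      rw [hzeq, rot_aE, show -θ + θ = 0 by ring, E_zero, mul_one]
    rw [hjump z ⟨h1, h2⟩ _ (by linarith) (by rw [hhit]; exact real_mem_segD a h1 h2) ?_, hhit, himp]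
    intro s hs1 hs2
    rw [hzeq, rot_aE, ← E_period]
    exact not_mem_segD a (s + θ + 2 * Real.pi) ha (by linarith) (by linarith)

include hfollow in
lemma neg_real_follow (ρ : ℝ) (h1 : 1 ≤ ρ) (h2 : ρ ≤ 2) (u : ℝ) (hu0 : 0 ≤ u)
    (hu : u < Real.pi) : ψ u (-(ρ : ℂ)) = (ρ : ℂ) * E (u + Real.pi) := by
  have hπ := Real.pi_pos
  rw [show ((ρ:ℂ) * E (u + Real.pi)) = rotFlow u (-(ρ:ℂ)) by rw [neg_real_eq, rot_aE]]
  refine hfollow _ (neg_real_mem_annulus ρ h1 h2) u hu0 ?_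
  intro s hs1 hs2
  rw [neg_real_eq, rot_aE]
  exact not_mem_segD ρ (s + Real.pi) (by linarith) (by linarith) (by linarith)

include hjump in
lemma neg_real_jump (ρ : ℝ) (h1 : 1 ≤ ρ) (h2 : ρ ≤ 2) :
    ψ Real.pi (-(ρ : ℂ)) = -(((1 + ρ) / 2 : ℝ) : ℂ) := by
  have hπ := Real.pi_pos
  have hhit : rotFlow Real.pi (-(ρ:ℂ)) = (ρ : ℂ) := by
    rw [neg_real_eq, rot_aE, show Real.pi + Real.pi = 2 * Real.pi by ring, E_two_pi, mul_one]
  rw [hjump _ (neg_real_mem_annulus ρ h1 h2) _ hπ (by rw [hhit]; exact real_mem_segD ρ h1 h2) ?_,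
    hhit, impMap_real]
  · push_cast; ring
  · intro s hs1 hs2
    rw [neg_real_eq, rot_aE]
    exact not_mem_segD ρ (s + Real.pi) (by linarith) (by linarith) (by linarith)

include hid hsemi hjump in
lemma iterate_jump (k : ℕ) : ∀ ρ : ℝ, 1 ≤ ρ → ρ ≤ 3/2 → ∃ ρ' : ℝ, 1 ≤ ρ' ∧ ρ' ≤ ρ ∧
    ψ (k * Real.pi) (-(ρ : ℂ)) = -(ρ' : ℂ) := by
  have hπ := Real.pi_pos
  induction k with
  | zero =>
    intro ρ h1 h2
    exact ⟨ρ, h1, le_refl ρ, by simpa using hid _ (neg_real_mem_annulus ρ h1 (by linarith))⟩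
  | succ k ih =>
    intro ρ h1 h2
    have hmem := neg_real_mem_annulus ρ h1 (by linarith)
    have hstep : ψ ((k + 1 : ℕ) * Real.pi) (-(ρ:ℂ)) = ψ (k * Real.pi) (ψ Real.pi (-(ρ:ℂ))) := by
      rw [show ((k + 1 : ℕ) : ℝ) * Real.pi = (k : ℝ) * Real.pi + Real.pi by push_cast; ring]
      exact hsemi Real.pi ((k : ℝ) * Real.pi) (le_of_lt hπ) (by positivity) _ hmem
    rw [hstep, neg_real_jump ψ hjump ρ h1 (by linarith)]
    obtain ⟨ρ', hρ1, hρ2, hρ3⟩ := ih ((1 + ρ)/2) (by linarith) (by linarith)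
    exact ⟨ρ', hρ1, by linarith, hρ3⟩

include hid hsemi hfollow hjump in
/-- Master lemma: after time `2π` any orbit lies in the lower half of the
annulus of radius `≤ (1+|z|)/2`. -/
lemma master (z : ℂ) (hz : z ∈ annulus) (t : ℝ) (ht : 2 * Real.pi ≤ t) :
    ‖ψ t z‖ ≤ (1 + ‖z‖) / 2 ∧ (ψ t z).im ≤ 0 := by
  have hπ := Real.pi_pos
  obtain ⟨τ, hτ0, hτ2, hτψ⟩ := first_hit ψ hjump z hz
  obtain ⟨h1, h2⟩ := hz
  set ρ₁ : ℝ := (1 + ‖z‖) / 2 with hρ₁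
  have hρ11 : 1 ≤ ρ₁ := by rw [hρ₁]; linarith
  have hρ12 : ρ₁ ≤ 3/2 := by rw [hρ₁]; linarith
  -- decompose t - τ = k·π + u
  set r : ℝ := t - τ with hr
  have hr0 : 0 ≤ r := by linarith
  set k : ℕ := ⌊r / Real.pi⌋₊ with hk
  set u : ℝ := r - k * Real.pi with hu
  have hku : (k : ℝ) ≤ r / Real.pi := Nat.floor_le (by positivity)
  have hku2 : r / Real.pi < k + 1 := Nat.lt_floor_add_one _
  have hku' : (k:ℝ) * Real.pi ≤ r := (le_div_iff₀ hπ).1 hku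
  have hku2' : r < ((k:ℝ) + 1) * Real.pi := (div_lt_iff₀ hπ).1 hku2
  have hu0 : 0 ≤ u := by rw [hu]; linarith
  have huπ : u < Real.pi := by rw [hu]; nlinarith
  obtain ⟨ρ', hρ'1, hρ'2, hρ'3⟩ := iterate_jump ψ hid hsemi hjump k ρ₁ hρ11 hρ12
  have hsplit1 : ψ t z = ψ r (ψ τ z) := by
    rw [show t = r + τ by rw [hr]; ring]
    exact hsemi τ r (le_of_lt hτ0) hr0 z ⟨h1, h2⟩
  have hsplit2 : ψ r (-(ρ₁:ℂ)) = ψ u (ψ (k * Real.pi) (-(ρ₁:ℂ))) := by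
    rw [show r = u + k * Real.pi by rw [hu]; ring]
    exact hsemi ((k:ℝ) * Real.pi) u (by positivity) hu0 _
      (neg_real_mem_annulus ρ₁ hρ11 (by linarith))
  have hfinal : ψ t z = (ρ' : ℂ) * E (u + Real.pi) := by
    rw [hsplit1, hτψ, show (((1 + ‖z‖) / 2 : ℝ) : ℂ) = ((ρ₁ : ℝ) : ℂ) by rw [hρ₁],
      hsplit2, hρ'3,
      neg_real_follow ψ hfollow ρ' hρ'1 (by linarith) u hu0 huπ]
  constructor
  · rw [hfinal, norm_mul, E_abs, mul_one, Complex.norm_real, Real.norm_eq_abs,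
      _root_.abs_of_nonneg (by linarith : (0:ℝ) ≤ ρ')]
    linarith
  · rw [hfinal]
    have : ((ρ':ℂ) * E (u + Real.pi)).im = ρ' * Real.sin (u + Real.pi) := by
      simp [Complex.mul_im, E_re, E_im]
    rw [this]
    have hsin : Real.sin (u + Real.pi) ≤ 0 := by
      rw [Real.sin_add_pi]
      have : 0 ≤ Real.sin u := Real.sin_nonneg_of_nonneg_of_le_pi hu0 (le_of_lt huπ)
      linarith
    nlinarith

lemma E_mem_annulus (β : ℝ) : E β ∈ annulus := by
  constructor <;> rw [E_abs] <;> norm_num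

include hsemi hfollow hjump in
lemma periodic_pt (β : ℝ) (hβ1 : -Real.pi < β) (hβ2 : β < 0) :
    ψ Real.pi (E β) = E β := by
  have hπ := Real.pi_pos
  have hEeq : E β = ((1:ℝ) : ℂ) * E β := by norm_num
  have step1 : ψ (-β) (E β) = -((1:ℝ) : ℂ) := by
    have hhit : rotFlow (-β) (E β) = ((1:ℝ) : ℂ) := by
      rw [hEeq, rot_aE, show -β + β = 0 by ring, E_zero, mul_one]
    rw [hjump _ (E_mem_annulus β) _ (by linarith)
      (by rw [hhit]; exact real_mem_segD 1 le_rfl one_le_two) ?_, hhit, impMap_real]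
    · norm_num
    · intro s hs1 hs2
      rw [hEeq, rot_aE, ← E_period]
      exact not_mem_segD 1 (s + β + 2 * Real.pi) one_pos (by linarith) (by linarith)
  have step2 : ψ (Real.pi + β) (-((1:ℝ) : ℂ)) = E β := by
    rw [neg_real_follow ψ hfollow 1 le_rfl one_le_two (Real.pi + β) (by linarith) (by linarith)]
    rw [show Real.pi + β + Real.pi = β + 2 * Real.pi by ring, E_period]
    norm_num
  calc ψ Real.pi (E β) = ψ ((Real.pi + β) + (-β)) (E β) := by norm_num
    _ = ψ (Real.pi + β) (ψ (-β) (E β)) :=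
        hsemi (-β) (Real.pi + β) (by linarith) (by linarith) _ (E_mem_annulus β)
    _ = E β := by rw [step1, step2]

include hid hsemi hfollow hjump in
lemma periodic_pt_n (β : ℝ) (hβ1 : -Real.pi < β) (hβ2 : β < 0) (n : ℕ) :
    ψ (n * Real.pi) (E β) = E β := by
  have hπ := Real.pi_pos
  induction n with
  | zero => simpa using hid _ (E_mem_annulus β)
  | succ n ih =>
    rw [show ((n + 1 : ℕ) : ℝ) * Real.pi = (n : ℝ) * Real.pi + Real.pi by push_cast; ring,
      hsemi Real.pi ((n : ℝ) * Real.pi) (le_of_lt hπ) (by positivity) _ (E_mem_annulus β),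
      periodic_pt ψ hsemi hfollow hjump β hβ1 hβ2, ih]

end Dyn

lemma E_near_one (α : ℝ) (h : |α| ≤ 1) : ‖E α - 1‖ ≤ 2 * |α| := by
  have habs : ‖(α:ℂ) * Complex.I‖ = |α| := by simp
  have h2 := Complex.norm_exp_sub_one_le (x := (α:ℂ) * Complex.I) (by rw [habs]; exact h)
  rw [habs] at h2
  simpa [E] using h2

/-- In the annulus example: `I` is `1/2`-Lipschitz, `I(D) ∩ D = ∅`, and the non-wandering
set of the impulsive semiflow is the lower half of the unit circle. -/
theorem annulus_example (ψ : ℝ → ℂ → ℂ)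
    (hmaps : ∀ t : ℝ, 0 ≤ t → Set.MapsTo (ψ t) annulus annulus)
    (hid : ∀ x ∈ annulus, ψ 0 x = x)
    (hsemi : ∀ s t : ℝ, 0 ≤ s → 0 ≤ t → ∀ x ∈ annulus, ψ (t + s) x = ψ t (ψ s x))
    (hfollow : ∀ x ∈ annulus, ∀ t : ℝ, 0 ≤ t →
      (∀ s : ℝ, 0 < s → s ≤ t → rotFlow s x ∉ segD) → ψ t x = rotFlow t x)
    (hjump : ∀ x ∈ annulus, ∀ t : ℝ, 0 < t → rotFlow t x ∈ segD →
      (∀ s : ℝ, 0 < s → s < t → rotFlow s x ∉ segD) → ψ t x = impMap (rotFlow t x)) :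
    (∀ z w : ℂ, dist (impMap z) (impMap w) ≤ (1 / 2) * dist z w) ∧
    (impMap '' segD ∩ segD = ∅) ∧
    {x : ℂ | NonWanderingOn ψ annulus x} =
      {z : ℂ | ‖z‖ = 1 ∧ z.im ≤ 0} := by
  have hπ := Real.pi_pos
  refine ⟨?_, ?_, ?_⟩
  · -- Lipschitz
    intro z w
    have h : impMap z - impMap w = (w - z) / 2 := by simp only [impMap]; ring
    have h2 : ‖(w - z) / 2‖ = ‖z - w‖ / 2 := by
      rw [norm_div, Complex.norm_two, norm_sub_rev]
    rw [Complex.dist_eq, Complex.dist_eq, h, h2]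
    linarith [norm_nonneg (z - w)]
  · -- disjoint
    ext w
    simp only [Set.mem_inter_iff, Set.mem_image, Set.mem_empty_iff_false, iff_false, not_and]
    rintro ⟨z, ⟨hz1, hz2, hz3⟩, rfl⟩ ⟨him, hre, -⟩
    have : (impMap z).re = -1/2 - z.re / 2 := by
      simp [impMap, Complex.div_re]
      ring
    rw [this] at hre
    linarith
  · -- nonwandering set
    ext x
    simp only [Set.mem_setOf_eq]
    constructor
    · rintro ⟨hxA, hx⟩
      have h1 : 1 ≤ ‖x‖ := hxA.1
      have habs : ‖x‖ ≤ 1 := by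
        apply le_of_forall_pos_le_add
        intro ε hε
        obtain ⟨t, ht, y, hyA, hyd, hψd⟩ := hx (ε/3) (by linarith) (2 * Real.pi) (by linarith)
        obtain ⟨hm1, hm2⟩ := master ψ hid hsemi hfollow hjump y hyA t (le_of_lt ht)
        rw [Complex.dist_eq] at hyd hψd
        have t1 : ‖x‖ - ‖ψ t y‖ ≤ ‖ψ t y - x‖ := by
          have h3 := norm_sub_norm_le x (ψ t y)
          rw [show x - ψ t y = -(ψ t y - x) by ring, norm_neg] at h3
          exact h3
        have t2 : ‖y‖ - ‖x‖ ≤ ‖y - x‖ := by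
          have h3 := norm_sub_norm_le y x
          exact h3
        linarith
      have him : x.im ≤ 0 := by
        apply le_of_forall_pos_le_add
        intro ε hε
        obtain ⟨t, ht, y, hyA, hyd, hψd⟩ := hx ε hε (2 * Real.pi) (by linarith)
        obtain ⟨hm1, hm2⟩ := master ψ hid hsemi hfollow hjump y hyA t (le_of_lt ht)
        rw [Complex.dist_eq] at hψd
        have h3 : |x.im - (ψ t y).im| ≤ ‖ψ t y - x‖ := by
          rw [norm_sub_rev]
          have h4 := Complex.abs_im_le_norm (x - ψ t y)
          simpa using h4
        have h5 : x.im - (ψ t y).im ≤ |x.im - (ψ t y).im| := le_abs_self _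
        linarith
      exact ⟨le_antisymm habs h1, him⟩
    · rintro ⟨habs, him⟩
      have hxA : x ∈ annulus := ⟨by rw [habs], by rw [habs]; norm_num⟩
      refine ⟨hxA, ?_⟩
      intro ε hε T hT
      have hβex : ∃ β : ℝ, -Real.pi < β ∧ β < 0 ∧ ‖E β - x‖ < ε := by
        rcases lt_or_eq_of_le him with hlt | heq
        · refine ⟨Complex.arg x, Complex.neg_pi_lt_arg x, Complex.arg_neg_iff.mpr hlt, ?_⟩
          have hEx : E (Complex.arg x) = x := by
            have h := Complex.norm_mul_exp_arg_mul_I x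
            rw [habs] at h
            simpa [E] using h
          rw [hEx]
          simpa using hε
        · -- x is real with |x| = 1
          set δ : ℝ := min (ε/4) (1/2) with hδ
          have hδ0 : 0 < δ := by apply lt_min <;> linarith
          have hδ1 : δ ≤ 1/2 := min_le_right _ _
          have hδε : δ ≤ ε/4 := min_le_left _ _
          have hπ2 : (1:ℝ)/2 < Real.pi := by
            have := Real.pi_gt_three
            linarith
          have hxre : x = ((x.re : ℝ) : ℂ) := by
            apply Complex.ext <;> simp [← heq]
          have hre1 : x.re = 1 ∨ x.re = -1 := by
            have h6 : |x.re| = 1 := by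
              conv_rhs => rw [← habs]
              rw [hxre]
              simp
            rcases (abs_eq (by norm_num : (0:ℝ) ≤ 1)).1 h6 with h | h
            · exact Or.inl h
            · exact Or.inr h
          rcases hre1 with h | h
          · refine ⟨-δ, by linarith, by linarith, ?_⟩
            have hx1 : x = 1 := by rw [hxre, h]; norm_num
            have hb := E_near_one (-δ) (by rw [abs_neg, _root_.abs_of_nonneg (le_of_lt hδ0)]; linarith)
            rw [abs_neg, _root_.abs_of_nonneg (le_of_lt hδ0)] at hb
            rw [hx1]
            linarith
          · refine ⟨-Real.pi + δ, by linarith, by linarith, ?_⟩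
            have hx1 : x = -1 := by rw [hxre, h]; norm_num
            have hEeq : E (-Real.pi + δ) = -E δ := by
              have hp : E (-(2 * Real.pi)) = 1 := by
                have h7 := E_period (-(2 * Real.pi))
                rw [show -(2*Real.pi) + 2 * Real.pi = 0 by ring, E_zero] at h7
                exact h7.symm
              rw [show -Real.pi + δ = Real.pi + δ + -(2 * Real.pi) by ring, E_add, E_add, E_pi, hp]
              ring
            have hb := E_near_one δ (by rw [_root_.abs_of_nonneg (le_of_lt hδ0)]; linarith)
            rw [_root_.abs_of_nonneg (le_of_lt hδ0)] at hb
            rw [hx1, hEeq, show -E δ - (-1) = -(E δ - 1) by ring, norm_neg]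
            linarith
      obtain ⟨β, hβ1, hβ2, hβ3⟩ := hβex
      set n : ℕ := ⌊T / Real.pi⌋₊ + 1 with hn
      have hTn : T < n * Real.pi := by
        have h8 : T / Real.pi < (n : ℝ) := by
          push_cast [hn]
          linarith [Nat.lt_floor_add_one (T / Real.pi)]
        calc T = T / Real.pi * Real.pi := by field_simp
          _ < n * Real.pi := mul_lt_mul_of_pos_right h8 hπ
      refine ⟨n * Real.pi, hTn, E β, E_mem_annulus β, ?_, ?_⟩
      · rw [Complex.dist_eq]; exact hβ3
      · rw [periodic_pt_n ψ hid hsemi hfollow hjump β hβ1 hβ2 n, Complex.dist_eq]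
        exact hβ3
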